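/- Let (A, BWP) be a finite system of best-worst choice probabilities with |A| = 4. Suppose w : Π_A → ℝ is a function such that for every C ⊆ A with |C| ≤ 2, all distinct a, b ∈ A\C, and every ranking ρ ∈ S*(a, C, b), one has w(ρ) = K_{ab,C} / ((|C|+1)! · (2−|C|)!). Then for every B ⊆ A with |B| ≤ 2 and all distinct a, b ∈ A\B, Σ_{ρ ∈ S(a, A\B, b)} w(ρ) = BW_{A\B}(a,b). -/

import Mathlib

open Finset MeasureTheory

variable {α : Type*}

/-- A finite system of best-worst choice probabilities on the ground set `A = univ`:
each `BW B a b` is in `[0,1]` and the best-worst probabilities over each feasible set sum to 1. -/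
def IsBWSystem [Fintype α] [DecidableEq α] (BW : Finset α → α → α → ℝ) : Prop :=
  (∀ B : Finset α, 2 ≤ B.card → ∀ a ∈ B, ∀ b ∈ B, a ≠ b → BW B a b ∈ Set.Icc (0:ℝ) 1) ∧
  ∀ B : Finset α, 2 ≤ B.card → ∑ a ∈ B, ∑ b ∈ B.erase a, BW B a b = 1

/-- The best-worst Block–Marschak polynomial `K_{ab,B} = ∑_{C ⊆ B} (-1)^{|B|-|C|} BW_{A∖C}(a,b)`. -/
def BMK [Fintype α] [DecidableEq α] (BW : Finset α → α → α → ℝ) (a b : α) (B : Finset α) : ℝ :=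
  ∑ C ∈ B.powerset, (-1 : ℝ) ^ (B.card - C.card) * BW Cᶜ a b

/-- A ranking of (all of) `α`: a linear order, encoded as a bijection to `Fin |α|`.
Larger values mean "ranked higher". -/
abbrev Ranking (α : Type*) [Fintype α] := α ≃ Fin (Fintype.card α)

/-- `Sbw D a b` : the set of rankings in which `a` is the maximum and `b` is the minimum of `D`. -/
def Sbw [Fintype α] [DecidableEq α] (D : Finset α) (a b : α) : Finset (Ranking α) :=
  univ.filter fun ρ => (∀ c ∈ D, ρ c ≤ ρ a) ∧ (∀ c ∈ D, ρ b ≤ ρ c)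

/-- `SStar B a b` : the set of rankings in which `a` is the maximum and `b` is the minimum of
`Bᶜ = A∖B` and, in addition, every element of `B` is either above `a` or below `b`. -/
def SStar [Fintype α] [DecidableEq α] (B : Finset α) (a b : α) : Finset (Ranking α) :=
  univ.filter fun ρ =>
    (∀ c ∈ Bᶜ, ρ c ≤ ρ a) ∧ (∀ c ∈ Bᶜ, ρ b ≤ ρ c) ∧ ∀ c ∈ B, ρ a < ρ c ∨ ρ c < ρ b

set_option maxRecDepth 10000 in
private lemma fin4_count : ∀ C : Finset (Fin 4), C.card ≤ 2 → ∀ a ∈ Cᶜ, ∀ b ∈ Cᶜ, a ≠ b →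
    (SStar C a b).card = (C.card + 1).factorial * (2 - C.card).factorial := by decide

private lemma card_SStar [Fintype α] [DecidableEq α] (h4 : Fintype.card α = 4)
    (C : Finset α) (hC : C.card ≤ 2) (a b : α) (ha : a ∈ Cᶜ) (hb : b ∈ Cᶜ) (hab : a ≠ b) :
    (SStar C a b).card = (C.card + 1).factorial * (2 - C.card).factorial := by
  classical
  obtain ⟨e⟩ : Nonempty (α ≃ Fin 4) := ⟨Fintype.equivFinOfCardEq h4⟩
  have h4' : Fintype.card α = Fintype.card (Fin 4) := by simp [h4]
  have hmem : ∀ x : α, e x ∈ (C.image e)ᶜ ↔ x ∈ Cᶜ := by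
    intro x; simp [Finset.mem_image, e.injective.eq_iff]
  have hcard : (C.image e).card = C.card := Finset.card_image_of_injective _ e.injective
  have key : (SStar C a b).card = (SStar (C.image e) (e a) (e b)).card := by
    apply Finset.card_nbij' (i := fun ρ => e.symm.trans (ρ.trans (finCongr h4')))
      (j := fun σ => e.trans (σ.trans (finCongr h4'.symm)))
    · intro ρ hρ
      simp only [SStar, mem_coe, mem_filter, mem_univ, true_and] at hρ ⊢
      obtain ⟨g1, g2, g3⟩ := hρ
      refine ⟨?_, ?_, ?_⟩
      · intro c' hc'
        have := g1 (e.symm c') (by rw [← hmem]; simpa using hc')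
        simp only [Equiv.trans_apply, finCongr_apply, Fin.le_def, Fin.coe_cast,
          Equiv.symm_apply_apply]
        exact this
      · intro c' hc'
        have := g2 (e.symm c') (by rw [← hmem]; simpa using hc')
        simp only [Equiv.trans_apply, finCongr_apply, Fin.le_def, Fin.coe_cast,
          Equiv.symm_apply_apply]
        exact this
      · intro c' hc'
        have hc : e.symm c' ∈ C := by
          have h' : ¬ (e.symm c' ∈ Cᶜ) := by rw [← hmem]; simpa using hc'
          simpa using h'
        have := g3 _ hc
        simp only [Equiv.trans_apply, finCongr_apply, Fin.lt_def, Fin.coe_cast,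
          Equiv.symm_apply_apply]
        exact this
    · intro σ hσ
      simp only [SStar, mem_coe, mem_filter, mem_univ, true_and] at hσ ⊢
      obtain ⟨g1, g2, g3⟩ := hσ
      refine ⟨?_, ?_, ?_⟩
      · intro c hc
        have := g1 (e c) ((hmem c).2 hc)
        simp only [Equiv.trans_apply, finCongr_apply, Fin.le_def, Fin.coe_cast]
        exact this
      · intro c hc
        have := g2 (e c) ((hmem c).2 hc)
        simp only [Equiv.trans_apply, finCongr_apply, Fin.le_def, Fin.coe_cast]
        exact this
      · intro c hc
        have := g3 (e c) (Finset.mem_image_of_mem _ hc)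
        simp only [Equiv.trans_apply, finCongr_apply, Fin.lt_def, Fin.coe_cast]
        exact this
    · intro ρ _
      ext x
      simp only [Equiv.trans_apply, finCongr_apply, Fin.coe_cast, Equiv.symm_apply_apply]
    · intro σ _
      refine Equiv.ext fun x => Fin.ext ?_
      simp only [Equiv.trans_apply, finCongr_apply, Fin.coe_cast, Equiv.apply_symm_apply]
  rw [key, fin4_count _ (hcard ▸ hC) _ ((hmem a).2 ha) _ ((hmem b).2 hb)
    (fun h => hab (e.injective h)), hcard]

private lemma sum_pow_neg_one [DecidableEq α] (B : Finset α) :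
    ∑ E ∈ B.powerset, (-1 : ℝ) ^ E.card = if B = ∅ then 1 else 0 := by
  have h := Finset.sum_powerset_neg_one_pow_card (x := B)
  have : ((∑ E ∈ B.powerset, (-1 : ℤ) ^ E.card : ℤ) : ℝ)
      = ∑ E ∈ B.powerset, (-1 : ℝ) ^ E.card := by push_cast; rfl
  rw [← this, h]
  split_ifs <;> simp

private lemma moebius [DecidableEq α] (f : Finset α → ℝ) (B : Finset α) :
    ∑ C ∈ B.powerset, ∑ D ∈ C.powerset, (-1 : ℝ) ^ (C.card - D.card) * f D = f B := by
  rw [Finset.sum_comm' (s' := fun D => B.powerset.filter (fun C => D ⊆ C))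
    (t' := B.powerset) (fun C D => by
      simp only [mem_powerset, mem_filter]
      exact ⟨fun ⟨h1, h2⟩ => ⟨⟨h1, h2⟩, h2.trans h1⟩, fun ⟨⟨h1, h2⟩, _⟩ => ⟨h1, h2⟩⟩)]
  have key : ∀ D ∈ B.powerset,
      ∑ C ∈ B.powerset.filter (fun C => D ⊆ C), (-1 : ℝ) ^ (C.card - D.card) * f D
      = (if D = B then 1 else 0) * f D := by
    intro D hD
    rw [mem_powerset] at hD
    rw [← Finset.sum_mul]
    congr 1
    have : ∑ C ∈ B.powerset.filter (fun C => D ⊆ C), (-1 : ℝ) ^ (C.card - D.card)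
        = ∑ E ∈ (B \ D).powerset, (-1 : ℝ) ^ E.card := by
      apply Finset.sum_nbij' (i := fun C => C \ D) (j := fun E => D ∪ E)
      · intro C hC
        simp only [mem_filter, mem_powerset] at hC
        exact mem_powerset.2 (Finset.sdiff_subset_sdiff hC.1 le_rfl)
      · intro E hE
        rw [mem_powerset] at hE
        refine mem_filter.2 ⟨mem_powerset.2 (Finset.union_subset hD
          (hE.trans Finset.sdiff_subset)), Finset.subset_union_left⟩
      · intro C hC
        simp only [mem_filter, mem_powerset] at hC
        exact Finset.union_sdiff_of_subset hC.2
      · intro E hE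
        rw [mem_powerset] at hE
        have hdisj : Disjoint D E := (Finset.disjoint_sdiff.mono_left le_rfl).mono_right hE
        exact Finset.union_sdiff_cancel_left hdisj
      · intro C hC
        simp only [mem_filter, mem_powerset] at hC
        rw [Finset.card_sdiff_of_subset hC.2]
    rw [this, sum_pow_neg_one]
    have hiff : (B \ D = ∅) ↔ (D = B) := by
      rw [Finset.sdiff_eq_empty_iff_subset]
      exact ⟨fun h => le_antisymm hD h, fun h => h ▸ le_rfl⟩
    rw [if_congr hiff rfl rfl]
  rw [Finset.sum_congr rfl key,
    Finset.sum_eq_single B (fun D _ hne => by simp [hne])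
      (fun h => absurd (mem_powerset.2 le_rfl) h)]
  simp

/-- For `|A| = 4`: if `w : Π_A → ℝ` takes the value `K_{ab,C} / ((|C|+1)! (2−|C|)!)` on every
ranking in `S*(a, C, b)` (for all `C ⊆ A` with `|C| ≤ 2` and distinct `a, b ∈ A∖C`), then for
every `B ⊆ A` with `|B| ≤ 2` and distinct `a, b ∈ A∖B`, the total weight of `S(a, A∖B, b)`
is `BW_{A∖B}(a,b)`. -/
theorem sum_weights_on_Sbw_eq_BW [Fintype α] [DecidableEq α]
    (BW : Finset α → α → α → ℝ) (h4 : Fintype.card α = 4) (hsys : IsBWSystem BW)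
    (w : Ranking α → ℝ)
    (hw : ∀ C : Finset α, C.card ≤ 2 → ∀ a ∈ Cᶜ, ∀ b ∈ Cᶜ, a ≠ b →
      ∀ ρ ∈ SStar C a b,
        w ρ = BMK BW a b C / ((C.card + 1).factorial * (2 - C.card).factorial : ℝ)) :
    ∀ B : Finset α, B.card ≤ 2 → ∀ a ∈ Bᶜ, ∀ b ∈ Bᶜ, a ≠ b →
      ∑ ρ ∈ Sbw Bᶜ a b, w ρ = BW Bᶜ a b := by
  intro B hB a ha b hb hab
  classical
  set key : Ranking α → Finset α := fun ρ => B.filter (fun c => ρ c < ρ b ∨ ρ a < ρ c) with hkey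
  have hmaps : ∀ ρ ∈ Sbw Bᶜ a b, key ρ ∈ B.powerset :=
    fun ρ _ => mem_powerset.2 (filter_subset _ _)
  rw [← Finset.sum_fiberwise_of_maps_to hmaps w]
  have hfib : ∀ C ∈ B.powerset, (Sbw Bᶜ a b).filter (fun ρ => key ρ = C) = SStar C a b := by
    intro C hC
    rw [mem_powerset] at hC
    ext ρ
    simp only [mem_filter, Sbw, SStar, mem_univ, true_and, hkey]
    constructor
    · rintro ⟨⟨h1, h2⟩, hk⟩
      refine ⟨?_, ?_, ?_⟩
      · intro c hc
        by_cases hcB : c ∈ B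
        · have : c ∉ B.filter (fun c => ρ c < ρ b ∨ ρ a < ρ c) := by
            rw [hk]; simpa using hc
          rw [mem_filter] at this
          push_neg at this
          exact (this hcB).2
        · exact h1 c (by simpa using hcB)
      · intro c hc
        by_cases hcB : c ∈ B
        · have : c ∉ B.filter (fun c => ρ c < ρ b ∨ ρ a < ρ c) := by
            rw [hk]; simpa using hc
          rw [mem_filter] at this
          push_neg at this
          exact (this hcB).1
        · exact h2 c (by simpa using hcB)
      · intro c hc
        have : c ∈ B.filter (fun c => ρ c < ρ b ∨ ρ a < ρ c) := by rw [hk]; exact hc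
        rw [mem_filter] at this
        exact this.2.symm
    · rintro ⟨g1, g2, g3⟩
      have hBC : Bᶜ ⊆ Cᶜ := Finset.compl_subset_compl.2 hC
      refine ⟨⟨fun c hc => g1 c (hBC hc), fun c hc => g2 c (hBC hc)⟩, ?_⟩
      ext c
      rw [mem_filter]
      constructor
      · rintro ⟨hcB, hor⟩
        by_contra hcC
        have hcc : c ∈ Cᶜ := by simpa using hcC
        rcases hor with h | h
        · exact absurd (g2 c hcc) (not_le.2 h)
        · exact absurd (g1 c hcc) (not_le.2 h)
      · intro hcC
        exact ⟨hC hcC, (g3 c hcC).symm⟩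
  calc ∑ C ∈ B.powerset, ∑ ρ ∈ (Sbw Bᶜ a b).filter (fun ρ => key ρ = C), w ρ
      = ∑ C ∈ B.powerset, BMK BW a b C := by
        apply Finset.sum_congr rfl
        intro C hC
        rw [hfib C hC]
        have hCcard : C.card ≤ 2 := le_trans (Finset.card_le_card (mem_powerset.1 hC)) hB
        have hBC : Bᶜ ⊆ Cᶜ := Finset.compl_subset_compl.2 (mem_powerset.1 hC)
        have haC : a ∈ Cᶜ := hBC ha
        have hbC : b ∈ Cᶜ := hBC hb
        rw [Finset.sum_congr rfl (fun ρ hρ => hw C hCcard a haC b hbC hab ρ hρ),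
          Finset.sum_const, card_SStar h4 C hCcard a b haC hbC hab, nsmul_eq_mul]
        rw [div_eq_mul_inv, ← mul_assoc, mul_comm, ← mul_assoc]
        have hne : (((C.card + 1).factorial * (2 - C.card).factorial : ℕ) : ℝ) ≠ 0 := by
          positivity
        push_cast at hne ⊢
        rw [inv_mul_cancel₀ hne, one_mul]
    _ = BW Bᶜ a b := by
        have := moebius (fun D => BW Dᶜ a b) B
        simp only [BMK]
        -- need: ∑ C ∈ B.powerset, ∑ D ∈ C.powerset, (-1)^(C.card - D.card) * BW Dᶜ a b = BW Bᶜ a b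
        exact this
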